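/- (Hirschhorn) For all positive integers n and k, b(n;k) equals the sum, over all partitions π = (b_1, ..., b_k) of n into exactly k parts satisfying b_i − b_{i+1} ≥ 2 for 1 ≤ i ≤ k−1 and b_k ≥ 1, of the weight ω(π) = 2^{t(π)}, where t(π) = #{1 ≤ i ≤ k−1 : b_i − b_{i+1} > 2} + (1 if b_k > 1, and 0 if b_k = 1). -/

import Mathlib

open Finset
open scoped Classical

namespace BasisPartitions

/-! ### Ordinary partitions -/

/-- The parts of a partition, listed in weakly decreasing order. -/
def sparts {n : ℕ} (π : n.Partition) : List ℕ := π.parts.sort (· ≥ ·)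

/-- `conj L j` is the number of parts that are `≥ j`, i.e. the `j`-th part of the
conjugate partition (for `j ≥ 1`). -/
def conj (L : List ℕ) (j : ℕ) : ℕ := L.countP (fun b => j ≤ b)

/-- The Durfee square size: the largest `k` such that the `k`-th part is `≥ k`. -/
def durfee (L : List ℕ) : ℕ := (List.range L.length).countP (fun i => i + 1 ≤ L.getD i 0)

/-- The `(i+1)`-st successive rank `r_{i+1} = b_{i+1} - c_{i+1}` (0-indexed `i`). -/
def rank (L : List ℕ) (i : ℕ) : ℤ := (L.getD i 0 : ℤ) - (conj L (i + 1) : ℤ)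

/-- The successive rank vector `(r_1, ..., r_k)` where `k` is the Durfee square size. -/
def ranks (L : List ℕ) : List ℤ := (List.range (durfee L)).map (rank L)

/-- A basis partition: the partitioned number is minimal among all partitions having
the same successive rank vector. -/
def IsBasis {n : ℕ} (π : n.Partition) : Prop :=
  ∀ (m : ℕ) (π' : m.Partition), ranks (sparts π') = ranks (sparts π) → n ≤ m

/-- The signature: the number of distinct part sizes below the Durfee square. -/
def sig (L : List ℕ) : ℕ := ((L.drop (durfee L)).dedup).length

/-- `b(n;k)`: the number of basis partitions of `n` with Durfee square size `k`. -/
noncomputable def bCount (n k : ℕ) : ℕ :=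
  Nat.card {π : n.Partition // IsBasis π ∧ durfee (sparts π) = k}

/-- `b(n,k,s)`: the number of basis partitions of `n` with Durfee square size `k`
and signature `s`. -/
noncomputable def bCount3 (n k s : ℕ) : ℕ :=
  Nat.card {π : n.Partition // IsBasis π ∧ durfee (sparts π) = k ∧ sig (sparts π) = s}

/-- `B(n;j)`: the number of basis partitions of `n` with signature `j`. -/
noncomputable def BCount (n j : ℕ) : ℕ :=
  Nat.card {π : n.Partition // IsBasis π ∧ sig (sparts π) = j}

/-- Rogers–Ramanujan condition: exactly `k` parts, consecutive gaps `≥ 2`, last part `≥ 1`. -/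
def RR (L : List ℕ) (k : ℕ) : Prop :=
  L.length = k ∧ (∀ i, i + 1 < k → L.getD (i + 1) 0 + 2 ≤ L.getD i 0) ∧ 1 ≤ L.getD (k - 1) 0

/-- `t(π)` for a Rogers–Ramanujan partition: the number of gaps `> 2`, plus 1 if the
last part is `> 1`. -/
def tRR (L : List ℕ) (k : ℕ) : ℕ :=
  ((Finset.range (k - 1)).filter (fun i => L.getD (i + 1) 0 + 2 < L.getD i 0)).card +
    (if 1 < L.getD (k - 1) 0 then 1 else 0)

/-- Primary condition: exactly `k` parts, each part `≥ k`. -/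
def Primary (L : List ℕ) (k : ℕ) : Prop := L.length = k ∧ ∀ x ∈ L, k ≤ x

/-- `t(π)` for a primary partition: the number of strict descents, plus 1 if the
last part is `> k`. -/
def tP (L : List ℕ) (k : ℕ) : ℕ :=
  ((Finset.range (k - 1)).filter (fun i => L.getD (i + 1) 0 < L.getD i 0)).card +
    (if k < L.getD (k - 1) 0 then 1 else 0)

/-- A complete basis partition: every `j` with `1 ≤ j ≤ k-1` occurs as a part of `π_b`
(a row below the Durfee square) or as a part of `π_r` (a column length strictly to the
right of the Durfee square). -/
def IsComplete {n : ℕ} (π : n.Partition) : Prop :=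
  ∀ j : ℕ, 1 ≤ j → j < durfee (sparts π) →
    j ∈ (sparts π).drop (durfee (sparts π)) ∨
      ∃ c : ℕ, durfee (sparts π) < c ∧ conj (sparts π) c = j

/-- `b_c(n)`: the number of complete basis partitions of `n`. -/
noncomputable def bc (n : ℕ) : ℕ := Nat.card {π : n.Partition // IsBasis π ∧ IsComplete π}

/-! ### Partitions with non-repeating odd parts and their 2-modular graphs -/

/-- Partitions with non-repeating (distinct) odd parts. -/
def Pod {n : ℕ} (π : n.Partition) : Prop := ∀ x, Odd x → π.parts.count x ≤ 1

/-- The size (sum of entries) of the `c`-th column (1-indexed) of the 2-modular graph. -/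
def mcolSize (L : List ℕ) (c : ℕ) : ℕ :=
  (L.map (fun x => if 2 * c ≤ x then 2 else if x = 2 * c - 1 then 1 else 0)).sum

/-- The length (number of entries) of the `c`-th column (1-indexed) of the 2-modular graph. -/
def mcolLen (L : List ℕ) (c : ℕ) : ℕ := L.countP (fun x => 2 * c - 1 ≤ x)

/-- The number of entries in a row of the 2-modular graph recording the part `x`,
namely `⌈x/2⌉`. -/
def mrowLen (x : ℕ) : ℕ := (x + 1) / 2

/-- The 2-modular Durfee square size: the largest `k` with `⌈b_k/2⌉ ≥ k`. -/
def mdurfee (L : List ℕ) : ℕ := (List.range L.length).countP (fun i => 2 * i + 1 ≤ L.getD i 0)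

/-- The `(i+1)`-st 2-modular successive rank: (size of row `i+1`) − (size of column `i+1`). -/
def mrank (L : List ℕ) (i : ℕ) : ℤ := (L.getD i 0 : ℤ) - (mcolSize L (i + 1) : ℤ)

/-- The 2-modular successive rank vector. -/
def mranks (L : List ℕ) : List ℤ := (List.range (mdurfee L)).map (mrank L)

/-- A minimal basis partition in `P_{o,d}`: the partitioned number is minimal among all
partitions with non-repeating odd parts having the same 2-modular successive rank vector. -/
def MinBasis {n : ℕ} (μ : n.Partition) : Prop :=
  Pod μ ∧ ∀ (m : ℕ) (μ' : m.Partition), Pod μ' →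
    mranks (sparts μ') = mranks (sparts μ) → n ≤ m

/-- A basis partition in `P_{o,d}`: no row of the 2-modular graph strictly below the Durfee
square has size equal to the size of a column strictly to the right of the Durfee square. -/
def PodBasis {n : ℕ} (π : n.Partition) : Prop :=
  Pod π ∧ ∀ i, mdurfee (sparts π) ≤ i → i < (sparts π).length →
    ∀ c, mdurfee (sparts π) < c → mcolSize (sparts π) c ≠ (sparts π).getD i 0

/-- The signature of a basis partition in `P_{o,d}`: the number of distinct sizes among the
rows of the 2-modular graph strictly below the Durfee square. -/
def msig (L : List ℕ) : ℕ := ((L.drop (mdurfee L)).dedup).length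

/-- The ℓ-signature: the number of distinct lengths among the rows of the 2-modular
graph strictly below the Durfee square. -/
def lsig (L : List ℕ) : ℕ := (((L.drop (mdurfee L)).map mrowLen).dedup).length

/-- `b(n;j)` for `P_{o,d}`: the number of basis partitions of `n` in `P_{o,d}` with
signature `j`. -/
noncomputable def podB (n j : ℕ) : ℕ := Nat.card {π : n.Partition // PodBasis π ∧ msig (sparts π) = j}

/-- The number of odd parts. -/
def numOdd (L : List ℕ) : ℕ := L.countP (fun x => x % 2 = 1)

/-- A special partition: distinct parts with consecutive differences `≥ 4`, where a
difference equal to `4` is permitted only when both parts are even. -/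
def Special (L : List ℕ) : Prop :=
  ∀ i, i + 1 < L.length →
    L.getD (i + 1) 0 + 4 ≤ L.getD i 0 ∧
      (L.getD i 0 = L.getD (i + 1) 0 + 4 → Even (L.getD i 0) ∧ Even (L.getD (i + 1) 0))

/-- The `i`-th part of a special partition, with the convention that the part just after
the last one is `-2`. -/
def hpart (L : List ℕ) (i : ℕ) : ℤ := if i < L.length then (L.getD i 0 : ℤ) else -2

/-- `ℓ(π)`: the number of gaps `> 4` in a special partition, with the convention
`h_{k+1} = -2`. -/
def ell (L : List ℕ) : ℕ :=
  ((Finset.range L.length).filter (fun i => 4 < hpart L i - hpart L (i + 1))).card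


/-! ### Counting infrastructure -/

lemma filter_range_down {p : ℕ → Bool} : ∀ {N : ℕ}, (∀ i j, j ≤ i → i < N → p i = true → p j = true) →
    (List.range N).filter p = List.range ((List.range N).countP p) := by
  intro N
  induction N with
  | zero => intro _; simp
  | succ N ih =>
    intro hdc
    by_cases hN : p N = true
    · have hall : ∀ i ∈ List.range (N+1), p i = true := by
        intro i hi
        exact hdc N i (by simpa using Nat.lt_succ_iff.mp (List.mem_range.mp hi)) (Nat.lt_succ_self N) hN
      rw [List.filter_eq_self.mpr hall, List.countP_eq_length.mpr hall, List.length_range]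
    · have h1 : (List.range (N+1)).filter p = (List.range N).filter p := by
        rw [List.range_succ, List.filter_append]
        simp [hN]
      have h2 : (List.range (N+1)).countP p = (List.range N).countP p := by
        rw [List.range_succ, List.countP_append]
        simp [hN]
      rw [h1, h2]
      exact ih (fun i j hji hi hpi => hdc i j hji (Nat.lt_succ_of_lt hi) hpi)

lemma lt_countP_iff {p : ℕ → Bool} {N i : ℕ}
    (hdc : ∀ i j, j ≤ i → i < N → p i = true → p j = true) (hi : i < N) :
    p i = true ↔ i < (List.range N).countP p := by
  have := filter_range_down hdc
  constructor
  · intro hp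
    have : i ∈ List.range ((List.range N).countP p) := by
      rw [← this]; exact List.mem_filter.mpr ⟨List.mem_range.mpr hi, hp⟩
    simpa using this
  · intro hlt
    have : i ∈ (List.range N).filter p := by
      rw [this]; exact List.mem_range.mpr hlt
    exact (List.mem_filter.mp this).2

lemma countP_eq_of {p : ℕ → Bool} {N k : ℕ} (h : ∀ i < N, (p i = true ↔ i < k)) (hk : k ≤ N) :
    (List.range N).countP p = k := by
  have hdc : ∀ i j, j ≤ i → i < N → p i = true → p j = true := by
    intro i j hji hi hpi
    exact (h j (lt_of_le_of_lt hji hi)).mpr (lt_of_le_of_lt hji ((h i hi).mp hpi))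
  have hcle : (List.range N).countP p ≤ N := by
    simpa using List.countP_le_length (p := p) (l := List.range N)
  rcases Nat.lt_trichotomy ((List.range N).countP p) k with hlt | heq | hgt
  · have h1 := (lt_countP_iff hdc (lt_of_lt_of_le hlt hk)).mp
      ((h _ (lt_of_lt_of_le hlt hk)).mpr hlt)
    omega
  · exact heq
  · have h2 := (h _ (lt_of_lt_of_le hgt hcle)).mp
      ((lt_countP_iff hdc (lt_of_lt_of_le hgt hcle)).mpr hgt)
    omega

/-! ### cnt on multisets -/

/-- The number of elements of `s` that are `≥ j`. -/
def cnt (s : Multiset ℕ) (j : ℕ) : ℕ := (s.filter (fun x => j ≤ x)).card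

@[simp] lemma cnt_zero (j : ℕ) : cnt 0 j = 0 := rfl

@[simp] lemma cnt_add (s t : Multiset ℕ) (j : ℕ) : cnt (s + t) j = cnt s j + cnt t j := by
  simp [cnt, Multiset.filter_add]

@[simp] lemma cnt_cons (a : ℕ) (s : Multiset ℕ) (j : ℕ) :
    cnt (a ::ₘ s) j = cnt s j + (if j ≤ a then 1 else 0) := by
  by_cases h : j ≤ a <;> simp [cnt, Multiset.filter_cons, h]

@[simp] lemma cnt_replicate (c a j : ℕ) :
    cnt (Multiset.replicate c a) j = if j ≤ a then c else 0 := by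
  induction c with
  | zero => simp
  | succ c ih => rw [Multiset.replicate_succ]; by_cases h : j ≤ a <;> simp [h, ih] <;> omega

@[simp] lemma cnt_singleton (a j : ℕ) : cnt {a} j = if j ≤ a then 1 else 0 := by
  have : ({a} : Multiset ℕ) = a ::ₘ 0 := rfl
  rw [this, cnt_cons, cnt_zero, Nat.zero_add]

lemma cnt_anti (s : Multiset ℕ) {j j' : ℕ} (h : j ≤ j') : cnt s j' ≤ cnt s j := by
  induction s using Multiset.induction_on with
  | empty => simp
  | cons a s ih =>
    simp only [cnt_cons]
    by_cases h2 : j' ≤ a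
    · rw [if_pos h2, if_pos (le_trans h h2)]; omega
    · rw [if_neg h2]; omega

lemma cnt_coe (l : List ℕ) (j : ℕ) : cnt (↑l) j = l.countP (fun x => decide (j ≤ x)) := by
  simp [cnt, ← Multiset.coe_countP, Multiset.countP_eq_card_filter]

lemma cnt_count (s : Multiset ℕ) (j : ℕ) : cnt s j = s.count j + cnt s (j + 1) := by
  induction s using Multiset.induction_on with
  | empty => simp
  | cons a s ih =>
    by_cases h : j = a
    · subst h
      rw [cnt_cons, cnt_cons, Multiset.count_cons_self, if_pos (le_refl j),
        if_neg (by omega : ¬ (j + 1 ≤ j)), ih]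
      omega
    · rw [cnt_cons, cnt_cons, Multiset.count_cons_of_ne h, ih]
      by_cases h2 : j ≤ a <;> by_cases h3 : j + 1 ≤ a
      · rw [if_pos h2, if_pos h3]; omega
      · exact absurd (by omega : j = a) h
      · omega
      · rw [if_neg h2, if_neg h3]; omega

lemma mem_iff_cnt {s : Multiset ℕ} {j : ℕ} : j ∈ s ↔ cnt s (j + 1) < cnt s j := by
  rw [← Multiset.count_pos, cnt_count s j]; omega

lemma cnt_eq_zero {s : Multiset ℕ} {k : ℕ} (h : ∀ x ∈ s, x ≤ k) : cnt s (k + 1) = 0 := by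
  simp only [cnt, Multiset.card_eq_zero, Multiset.filter_eq_nil]
  intro x hx
  exact not_le.mpr (Nat.lt_succ_of_le (h x hx))

lemma sum_indicator (a k : ℕ) (h : a ≤ k) :
    (∑ i ∈ Finset.range k, if i + 1 ≤ a then 1 else 0) = a := by
  induction k with
  | zero => rw [Finset.range_zero, Finset.sum_empty]; omega
  | succ k ih =>
    rw [Finset.sum_range_succ]
    by_cases ha : a ≤ k
    · rw [ih ha, if_neg (by omega : ¬ (k + 1 ≤ a))]; omega
    · have ha' : a = k + 1 := by omega
      subst ha'
      rw [Finset.sum_congr rfl (fun i hi => if_pos (by simp at hi; omega))]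
      simp

lemma sum_cnt {s : Multiset ℕ} {k : ℕ} (h : ∀ x ∈ s, x ≤ k) :
    s.sum = ∑ i ∈ Finset.range k, cnt s (i + 1) := by
  induction s using Multiset.induction_on with
  | empty => simp
  | cons a s ih =>
    have ha : a ≤ k := h a (Multiset.mem_cons_self a s)
    rw [Multiset.sum_cons, ih (fun x hx => h x (Multiset.mem_cons_of_mem hx))]
    simp only [cnt_cons]
    rw [Finset.sum_add_distrib, sum_indicator a k ha]
    omega


/-! ### conjM -/

def conjM (k : ℕ) (A : ℕ → ℕ) : Multiset ℕ :=
  ∑ i ∈ Finset.range k, Multiset.replicate (A (i + 1) - A (i + 2)) (i + 1)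

lemma mem_conjM {k : ℕ} {A : ℕ → ℕ} {x : ℕ} (hx : x ∈ conjM k A) : 1 ≤ x ∧ x ≤ k := by
  rw [conjM] at hx
  rw [Multiset.mem_sum] at hx
  obtain ⟨i, hi, hx⟩ := hx
  rw [Multiset.eq_of_mem_replicate hx]
  simp at hi
  omega

lemma anti_of_step {A : ℕ → ℕ} (hA : ∀ i, 1 ≤ i → A (i + 1) ≤ A i) {i j : ℕ}
    (h1 : 1 ≤ j) (h : j ≤ i) : A i ≤ A j := by
  induction i, h using Nat.le_induction with
  | base => exact le_refl _
  | succ i hji ih => exact le_trans (hA i (le_trans h1 hji)) ih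

lemma cnt_conjM {A : ℕ → ℕ} (hA : ∀ i, 1 ≤ i → A (i + 1) ≤ A i) :
    ∀ {k j : ℕ}, 1 ≤ j → j ≤ k + 1 → cnt (conjM k A) j = A j - A (k + 1) := by
  intro k
  induction k with
  | zero => intro j h1 h2; have : j = 1 := by omega
            subst this; simp [conjM]
  | succ k ih =>
    intro j h1 h2
    have hsplit : conjM (k + 1) A = conjM k A + Multiset.replicate (A (k + 1) - A (k + 2)) (k + 1) := by
      rw [conjM, conjM, Finset.sum_range_succ]
    rw [hsplit, cnt_add, cnt_replicate, show k + 1 + 1 = k + 2 from rfl]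
    by_cases hj : j ≤ k + 1
    · rw [ih h1 hj, if_pos hj]
      have h3 : A (k + 2) ≤ A (k + 1) := hA (k + 1) (by omega)
      have h4 : A (k + 1) ≤ A j := anti_of_step hA h1 hj
      omega
    · have hj2 : j = k + 2 := by omega
      subst hj2
      rw [if_neg hj]
      have : cnt (conjM k A) (k + 2) = 0 := by
        have h0 : cnt (conjM k A) (k + 1) = 0 :=
          cnt_eq_zero (fun x hx => (mem_conjM hx).2)
        have := cnt_anti (conjM k A) (by omega : k + 1 ≤ k + 2)
        omega
      omega

lemma count_conjM {A : ℕ → ℕ} (hA : ∀ i, 1 ≤ i → A (i + 1) ≤ A i) {k j : ℕ}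
    (h1 : 1 ≤ j) (h2 : j ≤ k) : (conjM k A).count j = A j - A (j + 1) := by
  have e1 := cnt_conjM hA (k := k) (j := j) h1 (by omega)
  have e2 := cnt_conjM hA (k := k) (j := j + 1) (by omega) (by omega)
  have e3 := cnt_count (conjM k A) j
  have h3 : A (j + 1) ≤ A j := hA j h1
  have h4 : A (k + 1) ≤ A (j + 1) := anti_of_step hA (by omega) (by omega)
  omega

lemma conjM_cnt_self {s : Multiset ℕ} {k : ℕ} (h : ∀ x ∈ s, 1 ≤ x ∧ x ≤ k) :
    conjM k (cnt s) = s := by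
  have hA : ∀ i, 1 ≤ i → cnt s (i + 1) ≤ cnt s i := fun i _ => cnt_anti s (by omega)
  ext j
  by_cases hj : 1 ≤ j ∧ j ≤ k
  · rw [count_conjM hA hj.1 hj.2]
    have := cnt_count s j
    omega
  · have hj1 : j ∉ s := fun hmem => hj (h j hmem)
    have hj2 : j ∉ conjM k (cnt s) := fun hmem => hj (mem_conjM hmem)
    rw [Multiset.count_eq_zero.mpr hj1, Multiset.count_eq_zero.mpr hj2]

/-! ### List lemmas -/

lemma sum_map_range (N : ℕ) (f : ℕ → ℕ) :
    (((List.range N).map f).sum) = ∑ i ∈ Finset.range N, f i := by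
  induction N with
  | zero => simp
  | succ N ih => rw [List.range_succ, List.map_append, List.sum_append, Finset.sum_range_succ, ih]; simp

lemma getD_map_range {N : ℕ} (f : ℕ → ℕ) {i : ℕ} (hi : i < N) :
    ((List.range N).map f).getD i 0 = f i := by
  rw [List.getD_eq_getElem _ _ (by simpa using hi)]
  simp

lemma take_eq_map_range {L : List ℕ} {k : ℕ} (hk : k ≤ L.length) :
    L.take k = (List.range k).map (fun i => L.getD i 0) := by
  apply List.ext_getElem
  · simp [hk]
  · intro i h1 h2
    simp only [List.getElem_take, List.getElem_map, List.getElem_range]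
    rw [List.getD_eq_getElem _ _ (by simp at h2; omega)]

lemma drop_eq_map_range {L : List ℕ} {k : ℕ} (hk : k ≤ L.length) :
    L.drop k = (List.range (L.length - k)).map (fun t => L.getD (k + t) 0) := by
  apply List.ext_getElem
  · simp [hk]
  · intro i h1 h2
    simp only [List.getElem_drop, List.getElem_map, List.getElem_range]
    rw [List.getD_eq_getElem _ _ (by simp at h1; omega)]

lemma sorted_getD_anti {L : List ℕ} (hL : L.Pairwise (· ≥ ·)) {i j : ℕ} (hij : i ≤ j) :
    L.getD j 0 ≤ L.getD i 0 := by
  by_cases hj : j < L.length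
  · have hi : i < L.length := lt_of_le_of_lt hij hj
    rw [List.getD_eq_getElem _ _ hj, List.getD_eq_getElem _ _ hi]
    rcases Nat.lt_or_ge i j with h | h
    · exact List.pairwise_iff_getElem.mp hL i j hi hj h
    · have : i = j := by omega
      subst this; exact le_refl _
  · rw [List.getD_eq_default _ _ (by omega)]
    exact Nat.zero_le _

/-! ### durfee lemmas -/

lemma durfee_le_length (L : List ℕ) : durfee L ≤ L.length := by
  rw [durfee]
  simpa using List.countP_le_length (p := fun i => decide (i + 1 ≤ L.getD i 0)) (l := List.range L.length)

lemma durfee_dc {L : List ℕ} (hL : L.Pairwise (· ≥ ·)) :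
    ∀ i j, j ≤ i → i < L.length → decide (i + 1 ≤ L.getD i 0) = true →
      decide (j + 1 ≤ L.getD j 0) = true := by
  intro i j hji _ hp
  rw [decide_eq_true_iff] at hp ⊢
  have := sorted_getD_anti hL hji
  omega

lemma getD_of_lt_durfee {L : List ℕ} (hL : L.Pairwise (· ≥ ·)) {i : ℕ} (hi : i < durfee L) :
    i + 1 ≤ L.getD i 0 := by
  have hlen : i < L.length := lt_of_lt_of_le hi (durfee_le_length L)
  have := (lt_countP_iff (durfee_dc hL) hlen).mpr (by exact hi)
  rwa [decide_eq_true_iff] at this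

lemma durfee_le_getD {L : List ℕ} (hL : L.Pairwise (· ≥ ·)) {i : ℕ} (hi : i < durfee L) :
    durfee L ≤ L.getD i 0 := by
  have h1 : durfee L - 1 < durfee L := by omega
  have h2 := getD_of_lt_durfee hL h1
  have h3 := sorted_getD_anti hL (by omega : i ≤ durfee L - 1)
  omega

lemma getD_of_durfee_le {L : List ℕ} (hL : L.Pairwise (· ≥ ·)) {i : ℕ} (hi : durfee L ≤ i) :
    L.getD i 0 ≤ i := by
  by_cases hlen : i < L.length
  · have hiff := lt_countP_iff (durfee_dc hL) hlen
    rw [decide_eq_true_iff] at hiff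
    rw [durfee] at hi
    have hn : ¬ (i + 1 ≤ L.getD i 0) := fun hc => absurd (hiff.mp hc) (Nat.not_lt.mpr hi)
    omega
  · rw [List.getD_eq_default _ _ (by omega)]
    exact Nat.zero_le _

lemma durfee_eq_of {L : List ℕ} {k : ℕ} (h : ∀ i < L.length, (i + 1 ≤ L.getD i 0 ↔ i < k))
    (hk : k ≤ L.length) : durfee L = k := by
  rw [durfee]
  apply countP_eq_of _ hk
  intro i hi
  rw [decide_eq_true_iff]
  exact h i hi


/-! ### Partition basics -/

lemma sparts_sorted {n : ℕ} (π : n.Partition) : (sparts π).Pairwise (· ≥ ·) :=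
  π.parts.pairwise_sort _

lemma sparts_coe {n : ℕ} (π : n.Partition) : (↑(sparts π) : Multiset ℕ) = π.parts :=
  π.parts.sort_eq _

lemma sparts_sum {n : ℕ} (π : n.Partition) : (sparts π).sum = n := by
  have h := π.parts_sum
  rw [← sparts_coe π] at h
  simpa using h

lemma sparts_pos {n : ℕ} (π : n.Partition) {x : ℕ} (hx : x ∈ sparts π) : 1 ≤ x :=
  π.parts_pos (by rw [← sparts_coe π]; exact Multiset.mem_coe.mpr hx)

/-! ### Decomposition of a partition -/

/-- Parts below the Durfee square. -/
def muL (L : List ℕ) : Multiset ℕ := ↑(L.drop (durfee L))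

/-- Column lengths to the right of the Durfee square. -/
def nuL (L : List ℕ) : Multiset ℕ := conjM (durfee L) (fun j => L.getD (j - 1) 0 - durfee L)

/-- Rank vector determined by the data `(k, μ, ν)`. -/
def rvec (k : ℕ) (μ ν : Multiset ℕ) : List ℤ :=
  (List.range k).map (fun i => (cnt ν (i + 1) : ℤ) - (cnt μ (i + 1) : ℤ))

section Decomp

variable {L : List ℕ} (hL : L.Pairwise (· ≥ ·))
include hL

lemma nuA_anti : ∀ i, 1 ≤ i → (L.getD ((i + 1) - 1) 0 - durfee L) ≤ (L.getD (i - 1) 0 - durfee L) := by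
  intro i hi
  have := sorted_getD_anti hL (by omega : i - 1 ≤ (i + 1) - 1)
  omega

lemma nuA_top : L.getD ((durfee L + 1) - 1) 0 - durfee L = 0 := by
  have := getD_of_durfee_le hL (le_refl (durfee L))
  simpa using Nat.sub_eq_zero_of_le this

lemma cnt_nuL {j : ℕ} (h1 : 1 ≤ j) (h2 : j ≤ durfee L) :
    cnt (nuL L) j = L.getD (j - 1) 0 - durfee L := by
  rw [nuL, cnt_conjM (nuA_anti hL) h1 (by omega), nuA_top hL]
  omega

lemma getD_eq_cnt_nuL {i : ℕ} (hi : i < durfee L) :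
    L.getD i 0 = durfee L + cnt (nuL L) (i + 1) := by
  rw [cnt_nuL hL (by omega) (by omega)]
  have := durfee_le_getD hL hi
  simp only [Nat.add_sub_cancel]
  omega

lemma mem_nuL {x : ℕ} (hx : x ∈ nuL L) : 1 ≤ x ∧ x ≤ durfee L := by
  exact mem_conjM hx

lemma mem_muL {x : ℕ} (hx : x ∈ muL L) : 1 ≤ x → x ≤ durfee L := by
  intro _
  rw [muL, Multiset.mem_coe, drop_eq_map_range (durfee_le_length L)] at hx
  rw [List.mem_map] at hx
  obtain ⟨t, ht, rfl⟩ := hx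
  calc L.getD (durfee L + t) 0 ≤ L.getD (durfee L) 0 := sorted_getD_anti hL (by omega)
    _ ≤ durfee L := getD_of_durfee_le hL (le_refl _)

lemma cnt_muL {j : ℕ} (h1 : 1 ≤ j) (h2 : j ≤ durfee L) :
    conj L j = durfee L + cnt (muL L) j := by
  have hk := durfee_le_length L
  conv_lhs => rw [conj, ← List.take_append_drop (durfee L) L]
  rw [List.countP_append]
  have h3 : (L.take (durfee L)).countP (fun b => decide (j ≤ b)) = durfee L := by
    rw [List.countP_eq_length.mpr, List.length_take]
    · omega
    · intro x hx
      rw [take_eq_map_range hk, List.mem_map] at hx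
      obtain ⟨i, hi, rfl⟩ := hx
      rw [List.mem_range] at hi
      have := durfee_le_getD hL hi
      simp only [decide_eq_true_iff]
      omega
  have h4 : (L.drop (durfee L)).countP (fun b => decide (j ≤ b)) = cnt (muL L) j := by
    rw [muL, cnt_coe]
  rw [h3, h4]

lemma ranks_decomp : ranks L = rvec (durfee L) (muL L) (nuL L) := by
  rw [ranks, rvec]
  apply List.map_congr_left
  intro i hi
  rw [List.mem_range] at hi
  rw [rank, cnt_muL hL (by omega) (by omega), getD_eq_cnt_nuL hL hi]
  push_cast
  ring

lemma sum_decomp : L.sum = durfee L * durfee L + (muL L).sum + (nuL L).sum := by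
  have hk := durfee_le_length L
  conv_lhs => rw [← List.take_append_drop (durfee L) L, List.sum_append]
  have h1 : (L.take (durfee L)).sum = durfee L * durfee L + (nuL L).sum := by
    rw [take_eq_map_range hk, sum_map_range]
    rw [Finset.sum_congr rfl (fun i hi => getD_eq_cnt_nuL hL (List.mem_range.mp hi))]
    rw [Finset.sum_add_distrib, Finset.sum_const, Finset.card_range, smul_eq_mul]
    rw [sum_cnt (fun x hx => (mem_nuL hL hx).2)]
  have h2 : (L.drop (durfee L)).sum = (muL L).sum := by
    rw [muL]
    simp
  rw [h1, h2]
  ring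

lemma parts_decomp :
    (↑L : Multiset ℕ) =
      ↑((List.range (durfee L)).map (fun i => durfee L + cnt (nuL L) (i + 1))) + muL L := by
  conv_lhs => rw [← List.take_append_drop (durfee L) L]
  rw [← Multiset.coe_add]
  congr 1
  rw [take_eq_map_range (durfee_le_length L)]
  congr 1
  apply List.map_congr_left
  intro i hi
  exact getD_eq_cnt_nuL hL (List.mem_range.mp hi)

end Decomp

/-! ### Building a partition from `(k, μ, ν)` -/

/-- The first `k` rows. -/
def buildL (k : ℕ) (ν : Multiset ℕ) : List ℕ := (List.range k).map (fun i => k + cnt ν (i + 1))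

/-- The full list of parts. -/
def buildList (k : ℕ) (μ ν : Multiset ℕ) : List ℕ := buildL k ν ++ μ.sort (· ≥ ·)

lemma sorted_map_range_anti {N : ℕ} {f : ℕ → ℕ} (hf : ∀ i j, i ≤ j → f j ≤ f i) :
    ((List.range N).map f).Pairwise (· ≥ ·) := by
  rw [List.pairwise_iff_getElem]
  intro i j hi hj hij
  simp only [List.getElem_map, List.getElem_range]
  exact hf i j (le_of_lt hij)

lemma buildL_sorted (k : ℕ) (ν : Multiset ℕ) : (buildL k ν).Pairwise (· ≥ ·) :=
  sorted_map_range_anti (fun i j hij => by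
    have := cnt_anti ν (by omega : i + 1 ≤ j + 1); omega)

lemma mem_buildL {k : ℕ} {ν : Multiset ℕ} {x : ℕ} (hx : x ∈ buildL k ν) : k ≤ x := by
  rw [buildL, List.mem_map] at hx
  obtain ⟨i, _, rfl⟩ := hx
  omega

lemma buildList_sorted {k : ℕ} {μ ν : Multiset ℕ} (hμ : ∀ x ∈ μ, x ≤ k) :
    (buildList k μ ν).Pairwise (· ≥ ·) := by
  rw [buildList, List.pairwise_append]
  refine ⟨buildL_sorted k ν, Multiset.pairwise_sort _ _, ?_⟩
  intro a ha b hb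
  have h1 : k ≤ a := mem_buildL ha
  have h2 : b ≤ k := hμ b ((Multiset.mem_sort _).mp hb)
  omega

lemma buildL_length (k : ℕ) (ν : Multiset ℕ) : (buildL k ν).length = k := by
  simp [buildL]

lemma buildL_sum {k : ℕ} {ν : Multiset ℕ} (hν : ∀ x ∈ ν, x ≤ k) :
    (buildL k ν).sum = k * k + ν.sum := by
  rw [buildL, sum_map_range, Finset.sum_add_distrib, Finset.sum_const, Finset.card_range,
    smul_eq_mul, sum_cnt hν]

lemma buildList_coe (k : ℕ) (μ ν : Multiset ℕ) :
    (↑(buildList k μ ν) : Multiset ℕ) = ↑(buildL k ν) + μ := by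
  rw [buildList, ← Multiset.coe_add]
  congr 1
  exact Multiset.sort_eq _ _

lemma buildList_sum {k : ℕ} {μ ν : Multiset ℕ} (hν : ∀ x ∈ ν, x ≤ k) :
    (buildList k μ ν).sum = k * k + μ.sum + ν.sum := by
  have h := congrArg Multiset.sum (buildList_coe k μ ν)
  rw [Multiset.sum_coe] at h
  rw [h, Multiset.sum_add, Multiset.sum_coe, buildL_sum hν]
  ring

/-- The partition built from `(k, μ, ν)`. -/
def buildP (n k : ℕ) (μ ν : Multiset ℕ) (hμ : ∀ x ∈ μ, 1 ≤ x ∧ x ≤ k)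
    (hν : ∀ x ∈ ν, 1 ≤ x ∧ x ≤ k) (hsum : k * k + μ.sum + ν.sum = n) : n.Partition := by
  refine ⟨↑(buildList k μ ν), ?_, ?_⟩
  · intro i hi
    rw [buildList_coe] at hi
    rw [Multiset.mem_add] at hi
    rcases hi with hi | hi
    · have h1 : k ≤ i := mem_buildL (Multiset.mem_coe.mp hi)
      have h2 : i ∈ buildL k ν := Multiset.mem_coe.mp hi
      rw [buildL, List.mem_map] at h2
      obtain ⟨t, ht, rfl⟩ := h2
      rcases Nat.eq_zero_or_pos k with hk | hk
      · subst hk; simp at ht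
      · omega
    · exact (hμ i hi).1
  · rw [Multiset.sum_coe, buildList_sum (fun x hx => (hν x hx).2), hsum]

lemma sparts_buildP {n k : ℕ} {μ ν : Multiset ℕ} (hμ : ∀ x ∈ μ, 1 ≤ x ∧ x ≤ k)
    (hν : ∀ x ∈ ν, 1 ≤ x ∧ x ≤ k) (hsum : k * k + μ.sum + ν.sum = n) :
    sparts (buildP n k μ ν hμ hν hsum) = buildList k μ ν := by
  refine List.Perm.eq_of_pairwise' (sparts_sorted _) (buildList_sorted (fun x hx => (hμ x hx).2)) ?_
  rw [← Multiset.coe_eq_coe, sparts_coe]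
  rfl

lemma buildList_getD_lt {k : ℕ} {μ ν : Multiset ℕ} {i : ℕ} (hi : i < k) :
    (buildList k μ ν).getD i 0 = k + cnt ν (i + 1) := by
  rw [buildList, List.getD_append _ _ _ _ (by rw [buildL_length]; omega), buildL,
    getD_map_range _ hi]

lemma buildList_getD_ge {k : ℕ} {μ ν : Multiset ℕ} (hμ : ∀ x ∈ μ, x ≤ k) {i : ℕ}
    (hi : k ≤ i) : (buildList k μ ν).getD i 0 ≤ k := by
  rw [buildList, List.getD_append_right _ _ _ _ (by rw [buildL_length]; omega)]
  by_cases h : i - (buildL k ν).length < (μ.sort (· ≥ ·)).length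
  · rw [List.getD_eq_getElem _ _ h]
    apply hμ
    rw [← Multiset.mem_sort (· ≥ ·)]
    exact List.getElem_mem _
  · rw [List.getD_eq_default _ _ (by omega)]
    exact Nat.zero_le _

lemma buildList_durfee {k : ℕ} {μ ν : Multiset ℕ} (hμ : ∀ x ∈ μ, x ≤ k) :
    durfee (buildList k μ ν) = k := by
  have hlen : (buildList k μ ν).length = k + (μ.sort (· ≥ ·)).length := by
    rw [buildList, List.length_append, buildL_length]
  apply durfee_eq_of
  · intro i hi
    constructor
    · intro hD
      by_contra hik
      have h1 : k ≤ i := by omega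
      have := buildList_getD_ge (μ := μ) (ν := ν) hμ h1
      omega
    · intro hik
      rw [buildList_getD_lt hik]
      omega
  · omega

lemma buildList_muL {k : ℕ} {μ ν : Multiset ℕ} (hμ : ∀ x ∈ μ, x ≤ k) :
    muL (buildList k μ ν) = μ := by
  rw [muL, buildList_durfee hμ, buildList]
  have h := List.drop_left (l₁ := buildL k ν) (l₂ := μ.sort (· ≥ ·))
  rw [buildL_length] at h
  rw [h]
  exact Multiset.sort_eq _ _

lemma buildList_nuL {k : ℕ} {μ ν : Multiset ℕ} (hμ : ∀ x ∈ μ, x ≤ k)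
    (hν : ∀ x ∈ ν, 1 ≤ x ∧ x ≤ k) : nuL (buildList k μ ν) = ν := by
  rw [nuL, buildList_durfee hμ]
  have hagree : ∀ j, 1 ≤ j → j ≤ k + 1 →
      (buildList k μ ν).getD (j - 1) 0 - k = cnt ν j := by
    intro j h1 h2
    by_cases hj : j ≤ k
    · have h := buildList_getD_lt (μ := μ) (ν := ν) (by omega : j - 1 < k)
      rw [h, show j - 1 + 1 = j by omega]
      omega
    · have hj2 : j = k + 1 := by omega
      subst hj2
      have h3 := buildList_getD_ge (μ := μ) (ν := ν) hμ (by omega : k ≤ k + 1 - 1)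
      have h4 : cnt ν (k + 1) = 0 := cnt_eq_zero (fun x hx => (hν x hx).2)
      omega
  have : conjM k (fun j => (buildList k μ ν).getD (j - 1) 0 - k) = conjM k (cnt ν) := by
    rw [conjM, conjM]
    apply Finset.sum_congr rfl
    intro i hi
    rw [Finset.mem_range] at hi
    rw [hagree (i + 1) (by omega) (by omega), hagree (i + 2) (by omega) (by omega)]
  rw [this]
  exact conjM_cnt_self hν

/-! ### Characterization of basis partitions -/

lemma ranks_length (L : List ℕ) : (ranks L).length = durfee L := by simp [ranks]

lemma getD_map_range' {α : Type*} {N : ℕ} (f : ℕ → α) (d : α) {i : ℕ} (hi : i < N) :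
    ((List.range N).map f).getD i d = f i := by
  rw [List.getD_eq_getElem _ _ (by simpa using hi)]
  simp

lemma rvec_inj {k : ℕ} {μ ν μ' ν' : Multiset ℕ} (h : rvec k μ ν = rvec k μ' ν') :
    ∀ i < k, (cnt ν (i + 1) : ℤ) - cnt μ (i + 1) = (cnt ν' (i + 1) : ℤ) - cnt μ' (i + 1) := by
  intro i hi
  have h2 : (rvec k μ ν).getD i 0 = (rvec k μ' ν').getD i 0 := by rw [h]
  rwa [rvec, rvec, getD_map_range' _ _ hi, getD_map_range' _ _ hi] at h2

lemma mem_muL_mem {L : List ℕ} {x : ℕ} (hx : x ∈ muL L) : x ∈ L :=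
  List.mem_of_mem_drop (Multiset.mem_coe.mp hx)

lemma muL_bounds {n : ℕ} (π : n.Partition) {x : ℕ} (hx : x ∈ muL (sparts π)) :
    1 ≤ x ∧ x ≤ durfee (sparts π) := by
  have h1 : 1 ≤ x := sparts_pos π (mem_muL_mem hx)
  exact ⟨h1, mem_muL (sparts_sorted π) hx h1⟩

lemma cnt_erase {s : Multiset ℕ} {v : ℕ} (hv : v ∈ s) (j : ℕ) :
    cnt s j = cnt (s.erase v) j + (if j ≤ v then 1 else 0) := by
  conv_lhs => rw [← Multiset.cons_erase hv]
  rw [cnt_cons]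

lemma not_isBasis_of_common {n : ℕ} (π : n.Partition) {v : ℕ}
    (hvμ : v ∈ muL (sparts π)) (hvν : v ∈ nuL (sparts π)) : ¬ IsBasis π := by
  set L := sparts π with hLdef
  set k := durfee L with hkdef
  have hL : L.Pairwise (· ≥ ·) := sparts_sorted π
  set μ' := (muL L).erase v with hμ'
  set ν' := (nuL L).erase v with hν'
  have hμ'b : ∀ x ∈ μ', 1 ≤ x ∧ x ≤ k := fun x hx => muL_bounds π (Multiset.mem_of_mem_erase hx)
  have hν'b : ∀ x ∈ ν', 1 ≤ x ∧ x ≤ k := fun x hx => mem_nuL hL (Multiset.mem_of_mem_erase hx)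
  have hv1 : 1 ≤ v := (muL_bounds π hvμ).1
  have hn : n = k * k + (muL L).sum + (nuL L).sum := by
    rw [← sparts_sum π]; exact sum_decomp hL
  have hμsum : (muL L).sum = v + μ'.sum := by
    conv_lhs => rw [← Multiset.cons_erase hvμ]
    rw [Multiset.sum_cons]
  have hνsum : (nuL L).sum = v + ν'.sum := by
    conv_lhs => rw [← Multiset.cons_erase hvν]
    rw [Multiset.sum_cons]
  set m := k * k + μ'.sum + ν'.sum with hm
  have hmn : m + 2 * v = n := by omega
  set π' := buildP m k μ' ν' hμ'b hν'b rfl with hπ'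
  intro hbasis
  have hranks : ranks (sparts π') = ranks L := by
    rw [sparts_buildP, ranks_decomp (buildList_sorted (fun x hx => (hμ'b x hx).2)),
      buildList_durfee (fun x hx => (hμ'b x hx).2),
      buildList_muL (fun x hx => (hμ'b x hx).2), buildList_nuL (fun x hx => (hμ'b x hx).2) hν'b,
      ranks_decomp hL, ← hkdef, rvec, rvec]
    apply List.map_congr_left
    intro i hi
    rw [cnt_erase hvμ (i + 1), cnt_erase hvν (i + 1)]
    push_cast
    ring
  have := hbasis m π' hranks
  omega

lemma isBasis_of_disjoint {n : ℕ} (π : n.Partition)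
    (hdisj : ∀ v, ¬(v ∈ muL (sparts π) ∧ v ∈ nuL (sparts π))) : IsBasis π := by
  intro m π' hranks
  set L := sparts π with hLdef
  set k := durfee L with hkdef
  have hL : L.Pairwise (· ≥ ·) := sparts_sorted π
  set L' := sparts π' with hL'def
  have hL' : L'.Pairwise (· ≥ ·) := sparts_sorted π'
  have hk' : durfee L' = k := by
    have h1 := congrArg List.length hranks
    rw [ranks_length, ranks_length] at h1
    exact h1
  set μ := muL L with hμdef
  set ν := nuL L with hνdef
  set μ' := muL L' with hμ'def
  set ν' := nuL L' with hν'def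
  have hμb : ∀ x ∈ μ, 1 ≤ x ∧ x ≤ k := fun x hx => muL_bounds π hx
  have hνb : ∀ x ∈ ν, 1 ≤ x ∧ x ≤ k := fun x hx => mem_nuL hL hx
  have hμ'b : ∀ x ∈ μ', 1 ≤ x ∧ x ≤ k := by
    intro x hx
    have := muL_bounds π' hx
    rwa [hk'] at this
  have hν'b : ∀ x ∈ ν', 1 ≤ x ∧ x ≤ k := by
    intro x hx
    have := mem_nuL hL' hx
    rwa [hk'] at this
  have hrv : rvec k μ' ν' = rvec k μ ν := by
    have h1 := ranks_decomp hL
    have h2 := ranks_decomp hL'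
    rw [hk'] at h2
    rw [hμ'def, hν'def, hμdef, hνdef]
    rw [← h2, hranks, h1, ← hkdef]
  have hdd := rvec_inj hrv
  -- the difference function
  set dd : ℕ → ℤ := fun j => (cnt μ' j : ℤ) - cnt μ j with hdddef
  have hddtop : dd (k + 1) = 0 := by
    rw [hdddef]
    simp only []
    rw [cnt_eq_zero (fun x hx => (hμ'b x hx).2), cnt_eq_zero (fun x hx => (hμb x hx).2)]
    simp
  have hee : ∀ j, 1 ≤ j → j ≤ k + 1 → (cnt ν' j : ℤ) - cnt ν j = dd j := by
    intro j h1 h2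
    by_cases hj : j ≤ k
    · have := hdd (j - 1) (by omega)
      rw [show j - 1 + 1 = j by omega] at this
      rw [hdddef]
      simp only []
      omega
    · have hj2 : j = k + 1 := by omega
      subst hj2
      rw [hddtop, cnt_eq_zero (fun x hx => (hν'b x hx).2), cnt_eq_zero (fun x hx => (hνb x hx).2)]
      simp
  -- all differences are nonnegative
  have hpos : ∀ j ∈ Finset.Icc 1 (k + 1), 0 ≤ dd j := by
    by_contra hcon
    push_neg at hcon
    obtain ⟨j0, hj0S, hj0⟩ := hcon
    have hSne : (Finset.Icc 1 (k + 1)).Nonempty := ⟨j0, hj0S⟩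
    obtain ⟨jm, hjmS, hjm⟩ := Finset.exists_min_image (Finset.Icc 1 (k + 1)) dd hSne
    set T := (Finset.Icc 1 (k + 1)).filter (fun j => dd j = dd jm) with hT
    have hTne : T.Nonempty := ⟨jm, Finset.mem_filter.mpr ⟨hjmS, rfl⟩⟩
    obtain ⟨j, hjT, hjmax⟩ := Finset.exists_max_image T (fun j => j) hTne
    have hjS := (Finset.mem_filter.mp hjT).1
    have hjval : dd j = dd jm := (Finset.mem_filter.mp hjT).2
    have hjmin : dd jm < 0 := lt_of_le_of_lt (hjm j0 hj0S) hj0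
    have hj1 : 1 ≤ j := (Finset.mem_Icc.mp hjS).1
    have hjle : j ≤ k + 1 := (Finset.mem_Icc.mp hjS).2
    have hjk : j ≤ k := by
      rcases Nat.lt_or_ge j (k + 1) with h | h
      · omega
      · have : j = k + 1 := by omega
        rw [this] at hjval
        rw [hddtop] at hjval
        omega
    have hj1S : j + 1 ∈ Finset.Icc 1 (k + 1) := Finset.mem_Icc.mpr (by omega)
    have hlt : dd j < dd (j + 1) := by
      rcases lt_or_eq_of_le (hjm (j + 1) hj1S) with h | h
      · omega
      · exfalso
        have : j + 1 ∈ T := Finset.mem_filter.mpr ⟨hj1S, h.symm⟩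
        have := hjmax (j + 1) this
        omega
    -- μ has a descent at j
    have hμdesc : cnt μ (j + 1) < cnt μ j := by
      have h1 : cnt μ' (j + 1) ≤ cnt μ' j := cnt_anti μ' (by omega)
      have h2 : (cnt μ' j : ℤ) = cnt μ j + dd j := by rw [hdddef]; simp only []; ring
      have h3 : (cnt μ' (j + 1) : ℤ) = cnt μ (j + 1) + dd (j + 1) := by
        rw [hdddef]; simp only []; ring
      have h4 : (cnt μ' (j + 1) : ℤ) ≤ cnt μ' j := by exact_mod_cast h1
      omega
    have hνdesc : cnt ν (j + 1) < cnt ν j := by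
      have h1 : cnt ν' (j + 1) ≤ cnt ν' j := cnt_anti ν' (by omega)
      have h2 := hee j hj1 (by omega)
      have h3 := hee (j + 1) (by omega) (by omega)
      have h4 : (cnt ν' (j + 1) : ℤ) ≤ cnt ν' j := by exact_mod_cast h1
      omega
    exact hdisj j ⟨mem_iff_cnt.mpr hμdesc, mem_iff_cnt.mpr hνdesc⟩
  -- conclude
  have hn : n = k * k + μ.sum + ν.sum := by rw [← sparts_sum π]; exact sum_decomp hL
  have hm : m = k * k + μ'.sum + ν'.sum := by
    rw [← sparts_sum π']
    have := sum_decomp hL'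
    rwa [hk'] at this
  have hμs : μ.sum ≤ μ'.sum := by
    rw [sum_cnt (fun x hx => (hμb x hx).2), sum_cnt (fun x hx => (hμ'b x hx).2)]
    have : ∀ i ∈ Finset.range k, cnt μ (i + 1) ≤ cnt μ' (i + 1) := by
      intro i hi
      have := hpos (i + 1) (Finset.mem_Icc.mpr (by simp at hi; omega))
      rw [hdddef] at this
      simp only [] at this
      omega
    exact Finset.sum_le_sum this
  have hνs : ν.sum ≤ ν'.sum := by
    rw [sum_cnt (fun x hx => (hνb x hx).2), sum_cnt (fun x hx => (hν'b x hx).2)]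
    have : ∀ i ∈ Finset.range k, cnt ν (i + 1) ≤ cnt ν' (i + 1) := by
      intro i hi
      rw [Finset.mem_range] at hi
      have h1 := hpos (i + 1) (Finset.mem_Icc.mpr (by omega))
      have h2 := hee (i + 1) (by omega) (by omega)
      omega
    exact Finset.sum_le_sum this
  omega

lemma isBasis_iff {n : ℕ} (π : n.Partition) :
    IsBasis π ↔ ∀ v, ¬(v ∈ muL (sparts π) ∧ v ∈ nuL (sparts π)) := by
  constructor
  · intro hb v hv
    exact not_isBasis_of_common π hv.1 hv.2 hb
  · exact isBasis_of_disjoint π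

/-! ### Rogers–Ramanujan side -/

/-- The combined multiset of rows below and columns right of the Durfee square. -/
def mOf (L : List ℕ) : Multiset ℕ := muL L + nuL L

/-- The Rogers–Ramanujan partition associated to a multiset of values in `[1,k]`. -/
def RRL (k : ℕ) (m : Multiset ℕ) : List ℕ :=
  (List.range k).map (fun i => 2 * (k - 1 - i) + 1 + cnt m (i + 1))

lemma RRL_length (k : ℕ) (m : Multiset ℕ) : (RRL k m).length = k := by simp [RRL]

lemma RRL_getD {k : ℕ} (m : Multiset ℕ) {i : ℕ} (hi : i < k) :
    (RRL k m).getD i 0 = 2 * (k - 1 - i) + 1 + cnt m (i + 1) := by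
  rw [RRL, getD_map_range _ hi]

lemma RRL_sorted (k : ℕ) (m : Multiset ℕ) : (RRL k m).Pairwise (· ≥ ·) := by
  apply sorted_map_range_anti
  intro i j hij
  have h1 := cnt_anti m (by omega : i + 1 ≤ j + 1)
  have h2 : k - 1 - j ≤ k - 1 - i := by omega
  omega

lemma sum_odds : ∀ k : ℕ, (∑ i ∈ Finset.range k, (2 * i + 1)) = k * k := by
  intro k
  induction k with
  | zero => simp
  | succ k ih => rw [Finset.sum_range_succ, ih]; ring

lemma RRL_sum {k : ℕ} {m : Multiset ℕ} (hm : ∀ x ∈ m, x ≤ k) :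
    (RRL k m).sum = k * k + m.sum := by
  rw [RRL, sum_map_range, Finset.sum_add_distrib]
  have hrefl : (∑ i ∈ Finset.range k, (2 * (k - 1 - i) + 1)) = k * k :=
    Eq.trans (Finset.sum_range_reflect (fun i => 2 * i + 1) k) (sum_odds k)
  rw [hrefl, ← sum_cnt hm]

lemma mem_mOf_bounds {n : ℕ} (π : n.Partition) {x : ℕ} (hx : x ∈ mOf (sparts π)) :
    1 ≤ x ∧ x ≤ durfee (sparts π) := by
  rw [mOf, Multiset.mem_add] at hx
  rcases hx with hx | hx
  · exact muL_bounds π hx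
  · exact mem_nuL (sparts_sorted π) hx

lemma RR_RRL {k : ℕ} (hk : 1 ≤ k) (m : Multiset ℕ) : RR (RRL k m) k := by
  refine ⟨RRL_length k m, ?_, ?_⟩
  · intro i hi
    rw [RRL_getD m (by omega), RRL_getD m (by omega)]
    have h1 := cnt_anti m (by omega : i + 1 ≤ i + 1 + 1)
    omega
  · rw [RRL_getD m (by omega : k - 1 < k)]
    omega

/-- Recovering the multiset from a Rogers–Ramanujan partition: gaps. -/
def gRR (L : List ℕ) (k j : ℕ) : ℕ :=
  if j = k then L.getD (k - 1) 0 - 1 else L.getD (j - 1) 0 - (L.getD j 0 + 2)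

def mRR (L : List ℕ) (k : ℕ) : Multiset ℕ :=
  ∑ j ∈ Finset.Icc 1 k, Multiset.replicate (gRR L k j) j

lemma count_mRR (L : List ℕ) (k j : ℕ) :
    (mRR L k).count j = if j ∈ Finset.Icc 1 k then gRR L k j else 0 := by
  rw [mRR, Multiset.count_sum']
  simp only [Multiset.count_replicate]
  exact Finset.sum_ite_eq' (Finset.Icc 1 k) j (gRR L k)

lemma mem_mRR {L : List ℕ} {k x : ℕ} (hx : x ∈ mRR L k) : 1 ≤ x ∧ x ≤ k := by
  rw [mRR, Multiset.mem_sum] at hx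
  obtain ⟨j, hj, hx⟩ := hx
  rw [Multiset.eq_of_mem_replicate hx]
  rw [Finset.mem_Icc] at hj
  exact hj

lemma mRR_RRL {k : ℕ} {m : Multiset ℕ} (hm : ∀ x ∈ m, 1 ≤ x ∧ x ≤ k) (hk : 1 ≤ k) :
    mRR (RRL k m) k = m := by
  ext j
  rw [count_mRR]
  by_cases hj : j ∈ Finset.Icc 1 k
  · rw [if_pos hj]
    rw [Finset.mem_Icc] at hj
    by_cases hjk : j = k
    · rw [hjk, gRR, if_pos rfl, RRL_getD m (by omega : k - 1 < k)]
      have h1 := cnt_count m k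
      have h2 : cnt m (k + 1) = 0 := cnt_eq_zero (fun x hx => (hm x hx).2)
      have h3 : k - 1 - (k - 1) = 0 := by omega
      rw [h3, show k - 1 + 1 = k by omega]
      omega
    · rw [gRR, if_neg hjk, RRL_getD m (by omega : j - 1 < k), RRL_getD m (by omega : j < k)]
      have h1 := cnt_count m j
      have h2 : j - 1 + 1 = j := by omega
      rw [h2]
      have h3 : k - 1 - (j - 1) = k - j := by omega
      have h4 : 2 * (k - j) = 2 * (k - 1 - j) + 2 := by omega
      have h5 := cnt_anti m (by omega : j ≤ j + 1)
      omega
  · rw [if_neg hj, eq_comm, Multiset.count_eq_zero]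
    intro hmem
    rw [Finset.mem_Icc] at hj
    exact hj ⟨(hm j hmem).1, (hm j hmem).2⟩

lemma cnt_mRR_RR {L : List ℕ} {k : ℕ} (hRR : RR L k) (hk : 1 ≤ k) :
    ∀ t, t < k → 2 * t + 1 ≤ L.getD (k - 1 - t) 0 ∧
      cnt (mRR L k) (k - t) = L.getD (k - 1 - t) 0 - (2 * t + 1) := by
  obtain ⟨hlen, hgap, hlast⟩ := hRR
  intro t
  induction t with
  | zero =>
    intro _
    have h1 : cnt (mRR L k) (k + 1) = 0 := cnt_eq_zero (fun x hx => (mem_mRR hx).2)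
    have h2 := cnt_count (mRR L k) k
    have h3 := count_mRR L k k
    rw [if_pos (Finset.mem_Icc.mpr (by omega)), gRR, if_pos rfl] at h3
    have h4 : k - 0 = k := by omega
    have h5 : k - 1 - 0 = k - 1 := by omega
    rw [h4, h5]
    omega
  | succ t ih =>
    intro ht
    have iht := ih (by omega)
    set j := k - t - 1 with hjdef
    have hj1 : 1 ≤ j := by omega
    have hjk : j < k := by omega
    have hgapj : L.getD j 0 + 2 ≤ L.getD (j - 1) 0 := by
      have := hgap (j - 1) (by omega)
      rw [show j - 1 + 1 = j by omega] at this
      exact this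
    have hcnt := cnt_count (mRR L k) j
    have hcount := count_mRR L k j
    rw [if_pos (Finset.mem_Icc.mpr (by omega)), gRR, if_neg (by omega : ¬ j = k)] at hcount
    have hidx1 : k - 1 - t = j := by omega
    have hidx2 : k - t = j + 1 := by omega
    rw [hidx1, hidx2] at iht
    have hidx3 : k - (t + 1) = j := by omega
    have hidx4 : k - 1 - (t + 1) = j - 1 := by omega
    rw [hidx3, hidx4]
    omega

lemma cnt_mRR_RR' {L : List ℕ} {k : ℕ} (hRR : RR L k) (hk : 1 ≤ k) {i : ℕ} (hi : i < k) :
    2 * (k - 1 - i) + 1 ≤ L.getD i 0 ∧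
      cnt (mRR L k) (i + 1) = L.getD i 0 - (2 * (k - 1 - i) + 1) := by
  have h := cnt_mRR_RR hRR hk (k - 1 - i) (by omega)
  rw [show k - 1 - (k - 1 - i) = i by omega, show k - (k - 1 - i) = i + 1 by omega] at h
  exact h

lemma RRL_mRR {L : List ℕ} {k : ℕ} (hRR : RR L k) (hk : 1 ≤ k) : RRL k (mRR L k) = L := by
  apply List.ext_getElem
  · rw [RRL_length, hRR.1]
  · intro i h1 h2
    have h1' : i < k := by rwa [RRL_length] at h1
    have h3 := cnt_mRR_RR' hRR hk h1'
    rw [← List.getD_eq_getElem _ 0 h1, ← List.getD_eq_getElem _ 0 h2, RRL_getD _ h1']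
    omega

lemma mRR_sum {L : List ℕ} {k : ℕ} (hRR : RR L k) (hk : 1 ≤ k) :
    k * k + (mRR L k).sum = L.sum := by
  rw [sum_cnt (fun x hx => (mem_mRR hx).2)]
  have h1 : ∀ i ∈ Finset.range k, cnt (mRR L k) (i + 1)
      = L.getD i 0 - (2 * (k - 1 - i) + 1) := by
    intro i hi
    exact (cnt_mRR_RR' hRR hk (Finset.mem_range.mp hi)).2
  rw [Finset.sum_congr rfl h1]
  have h2 : L.sum = ∑ i ∈ Finset.range k, L.getD i 0 := by
    conv_lhs => rw [← List.take_length (l := L), hRR.1, take_eq_map_range (by rw [hRR.1])]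
    rw [sum_map_range]
  rw [h2]
  have h3 : ∀ i ∈ Finset.range k, L.getD i 0
      = (2 * (k - 1 - i) + 1) + (L.getD i 0 - (2 * (k - 1 - i) + 1)) := by
    intro i hi
    have := (cnt_mRR_RR' hRR hk (Finset.mem_range.mp hi)).1
    omega
  conv_rhs => rw [Finset.sum_congr rfl h3]
  rw [Finset.sum_add_distrib]
  congr 1
  exact ((Finset.sum_range_reflect (fun i => 2 * i + 1) k).trans (sum_odds k)).symm

lemma toFinset_mRR (L : List ℕ) (k : ℕ) :
    (mRR L k).toFinset = (Finset.Icc 1 k).filter (fun j => gRR L k j ≠ 0) := by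
  ext j
  rw [Multiset.mem_toFinset, Finset.mem_filter, ← Multiset.count_pos, count_mRR]
  by_cases hj : j ∈ Finset.Icc 1 k
  · rw [if_pos hj]
    constructor
    · intro h; exact ⟨hj, by omega⟩
    · intro h; omega
  · rw [if_neg hj]
    constructor
    · intro h; omega
    · intro h; exact absurd h.1 hj

lemma tRR_eq_card {L : List ℕ} {k : ℕ} (hRR : RR L k) (hk : 1 ≤ k) :
    tRR L k = (mRR L k).toFinset.card := by
  rw [toFinset_mRR, tRR]
  have hicc : Finset.Icc 1 k = insert k (Finset.Icc 1 (k - 1)) := by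
    ext j
    rw [Finset.mem_insert, Finset.mem_Icc, Finset.mem_Icc]
    omega
  rw [hicc, Finset.filter_insert]
  have hgk : gRR L k k = L.getD (k - 1) 0 - 1 := by rw [gRR, if_pos rfl]
  have hcard : ((Finset.Icc 1 (k - 1)).filter (fun j => gRR L k j ≠ 0)).card
      = ((Finset.range (k - 1)).filter (fun i => L.getD (i + 1) 0 + 2 < L.getD i 0)).card := by
    refine Finset.card_nbij' (fun j => j - 1) (fun i => i + 1) ?_ ?_ ?_ ?_
    · intro j hj
      beta_reduce
      rw [Finset.mem_coe, Finset.mem_filter, Finset.mem_Icc] at hj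
      rw [Finset.mem_coe, Finset.mem_filter, Finset.mem_range]
      obtain ⟨⟨h1, h2⟩, h3⟩ := hj
      rw [gRR, if_neg (by omega : ¬ j = k)] at h3
      constructor
      · omega
      · rw [show j - 1 + 1 = j by omega]
        omega
    · intro i hi
      beta_reduce
      rw [Finset.mem_coe, Finset.mem_filter, Finset.mem_range] at hi
      rw [Finset.mem_coe, Finset.mem_filter, Finset.mem_Icc]
      obtain ⟨h1, h2⟩ := hi
      rw [gRR, if_neg (by omega : ¬ i + 1 = k)]
      rw [show i + 1 - 1 = i by omega]
      constructor
      · omega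
      · omega
    · intro j hj
      beta_reduce
      rw [Finset.mem_coe, Finset.mem_filter, Finset.mem_Icc] at hj
      omega
    · intro i hi
      beta_reduce
      omega
  by_cases hlast : 1 < L.getD (k - 1) 0
  · rw [if_pos hlast, if_pos (by omega : gRR L k k ≠ 0)]
    rw [Finset.card_insert_of_notMem (by
      rw [Finset.mem_filter, Finset.mem_Icc]
      intro h
      omega)]
    omega
  · rw [if_neg hlast, if_neg (by omega : ¬ gRR L k k ≠ 0)]
    omega

/-! ### The weight-preserving map -/

lemma buildP_parts (n k : ℕ) (μ ν : Multiset ℕ) (h1 : ∀ x ∈ μ, 1 ≤ x ∧ x ≤ k)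
    (h2 : ∀ x ∈ ν, 1 ≤ x ∧ x ≤ k) (h3 : k * k + μ.sum + ν.sum = n) :
    (buildP n k μ ν h1 h2 h3).parts = ↑(buildList k μ ν) := rfl

noncomputable def fB (n k : ℕ) (π : n.Partition) : n.Partition :=
  if h : durfee (sparts π) = k then
    ⟨↑(RRL k (mOf (sparts π))),
      by
        intro i hi
        rw [Multiset.mem_coe, RRL, List.mem_map] at hi
        obtain ⟨t, _, rfl⟩ := hi
        omega,
      by
        rw [Multiset.sum_coe, RRL_sum (fun x hx => by
          have hb := mem_mOf_bounds π hx
          omega)]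
        have hsum := sum_decomp (sparts_sorted π)
        rw [sparts_sum π, h] at hsum
        rw [mOf, Multiset.sum_add]
        omega⟩
  else π

lemma fB_parts {n k : ℕ} (π : n.Partition) (h : durfee (sparts π) = k) :
    (fB n k π).parts = ↑(RRL k (mOf (sparts π))) := by
  rw [fB, dif_pos h]

lemma sparts_fB {n k : ℕ} (π : n.Partition) (h : durfee (sparts π) = k) :
    sparts (fB n k π) = RRL k (mOf (sparts π)) := by
  refine List.Perm.eq_of_pairwise' (sparts_sorted _) (RRL_sorted _ _) ?_
  rw [← Multiset.coe_eq_coe, sparts_coe, fB_parts π h]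


theorem statement2 (n k : ℕ) (hn : 0 < n) (hk : 0 < k) :
    bCount n k =
      ∑ π ∈ Finset.univ.filter (fun π : n.Partition => RR (sparts π) k),
        2 ^ tRR (sparts π) k := by
  classical
  rw [bCount, Nat.card_eq_fintype_card, Fintype.card_subtype]
  have hmaps : ∀ π ∈ Finset.univ.filter
      (fun π : n.Partition => IsBasis π ∧ durfee (sparts π) = k),
      fB n k π ∈ Finset.univ.filter (fun π : n.Partition => RR (sparts π) k) := by
    intro π hπ
    rw [Finset.mem_filter] at hπ
    rw [Finset.mem_filter]
    refine ⟨Finset.mem_univ _, ?_⟩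
    rw [sparts_fB π hπ.2.2]
    exact RR_RRL hk (mOf (sparts π))
  rw [Finset.card_eq_sum_card_fiberwise hmaps]
  apply Finset.sum_congr rfl
  intro π' hπ'
  rw [Finset.mem_filter] at hπ'
  have hRRπ' : RR (sparts π') k := hπ'.2
  set m' := mRR (sparts π') k with hm'
  have hm'b : ∀ x ∈ m', 1 ≤ x ∧ x ≤ k := fun x hx => mem_mRR hx
  have hnsum : k * k + m'.sum = n := (mRR_sum hRRπ' hk).trans (sparts_sum π')
  have hfsum : ∀ S : Finset ℕ,
      k * k + (m'.filter (fun x => ¬ x ∈ S)).sum + (m'.filter (fun x => x ∈ S)).sum = n := by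
    intro S
    have h1 : (m'.filter (fun x => x ∈ S)) + (m'.filter (fun x => ¬ x ∈ S)) = m' :=
      Multiset.filter_add_not _ m'
    have h2 := congrArg Multiset.sum h1
    rw [Multiset.sum_add] at h2
    omega
  set jmap : Finset ℕ → n.Partition := fun S =>
    buildP n k (m'.filter (fun x => ¬ x ∈ S)) (m'.filter (fun x => x ∈ S))
      (fun x hx => hm'b x (Multiset.mem_of_mem_filter hx))
      (fun x hx => hm'b x (Multiset.mem_of_mem_filter hx))
      (hfsum S) with hjmap
  -- basic facts about jmap S
  have hjparts : ∀ S : Finset ℕ, (jmap S).parts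
      = ↑(buildList k (m'.filter (fun x => ¬ x ∈ S)) (m'.filter (fun x => x ∈ S))) := by
    intro S
    rw [hjmap]
    beta_reduce
    exact buildP_parts _ _ _ _ _ _ _
  have hjsparts : ∀ S : Finset ℕ, sparts (jmap S)
      = buildList k (m'.filter (fun x => ¬ x ∈ S)) (m'.filter (fun x => x ∈ S)) := by
    intro S
    rw [hjmap]
    beta_reduce
    exact sparts_buildP _ _ _
  have hjdurfee : ∀ S : Finset ℕ, durfee (sparts (jmap S)) = k := by
    intro S
    rw [hjsparts S]
    exact buildList_durfee (fun x hx => (hm'b x (Multiset.mem_of_mem_filter hx)).2)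
  have hjmu : ∀ S : Finset ℕ, muL (sparts (jmap S)) = m'.filter (fun x => ¬ x ∈ S) := by
    intro S
    rw [hjsparts S]
    exact buildList_muL (fun x hx => (hm'b x (Multiset.mem_of_mem_filter hx)).2)
  have hjnu : ∀ S : Finset ℕ, nuL (sparts (jmap S)) = m'.filter (fun x => x ∈ S) := by
    intro S
    rw [hjsparts S]
    exact buildList_nuL (fun x hx => (hm'b x (Multiset.mem_of_mem_filter hx)).2)
      (fun x hx => hm'b x (Multiset.mem_of_mem_filter hx))
  -- facts about members of the fiber
  have hfiber : ∀ π : n.Partition, IsBasis π → durfee (sparts π) = k → fB n k π = π' →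
      mOf (sparts π) = m' := by
    intro π hb hd hf
    have hsp : sparts π' = RRL k (mOf (sparts π)) := by rw [← hf, sparts_fB π hd]
    rw [hm', hsp]
    exact (mRR_RRL (fun x hx => by
      have hbd := mem_mOf_bounds π hx
      rw [hd] at hbd
      exact hbd) hk).symm
  have hcard : ((Finset.univ.filter
      (fun π : n.Partition => IsBasis π ∧ durfee (sparts π) = k)).filter
        (fun π => fB n k π = π')).card = (m'.toFinset.powerset).card := by
    refine Finset.card_nbij' (fun π => (nuL (sparts π)).toFinset) jmap ?_ ?_ ?_ ?_
    · -- forward map lands in the powerset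
      intro π hπ
      rw [Finset.mem_coe, Finset.mem_filter, Finset.mem_filter] at hπ
      obtain ⟨⟨_, hb, hd⟩, hf⟩ := hπ
      have hmOf := hfiber π hb hd hf
      beta_reduce
      rw [Finset.mem_coe, Finset.mem_powerset]
      intro x hx
      rw [Multiset.mem_toFinset] at hx ⊢
      rw [← hmOf, mOf, Multiset.mem_add]
      exact Or.inr hx
    · -- jmap lands in the fiber
      intro S hS
      rw [Finset.mem_coe, Finset.mem_filter, Finset.mem_filter]
      have hbasis : IsBasis (jmap S) := by
        rw [isBasis_iff, hjmu S, hjnu S]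
        intro v hv
        have h1 := Multiset.mem_filter.mp hv.1
        have h2 := Multiset.mem_filter.mp hv.2
        exact h1.2 h2.2
      refine ⟨⟨Finset.mem_univ _, hbasis, hjdurfee S⟩, ?_⟩
      apply Nat.Partition.ext
      rw [fB_parts _ (hjdurfee S)]
      have hmOf2 : mOf (sparts (jmap S)) = m' := by
        rw [mOf, hjmu S, hjnu S, add_comm]
        exact Multiset.filter_add_not _ m'
      rw [hmOf2, hm', RRL_mRR hRRπ' hk, sparts_coe]
    · -- left inverse
      intro π hπ
      rw [Finset.mem_coe, Finset.mem_filter, Finset.mem_filter] at hπ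
      obtain ⟨⟨_, hb, hd⟩, hf⟩ := hπ
      have hmOf := hfiber π hb hd hf
      have hdisj := (isBasis_iff π).mp hb
      apply Nat.Partition.ext
      beta_reduce
      rw [hjparts _]
      have hfilν : m'.filter (fun x => x ∈ (nuL (sparts π)).toFinset) = nuL (sparts π) := by
        rw [← hmOf, mOf, Multiset.filter_add]
        rw [Multiset.filter_eq_nil.mpr (fun x hxμ hxP =>
          hdisj x ⟨hxμ, Multiset.mem_toFinset.mp hxP⟩)]
        rw [Multiset.filter_eq_self.mpr (fun x hx => Multiset.mem_toFinset.mpr hx)]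
        rw [zero_add]
      have hfilμ : m'.filter (fun x => ¬ x ∈ (nuL (sparts π)).toFinset) = muL (sparts π) := by
        rw [← hmOf, mOf, Multiset.filter_add]
        have e1 : (muL (sparts π)).filter (fun x => ¬ x ∈ (nuL (sparts π)).toFinset)
            = muL (sparts π) :=
          Multiset.filter_eq_self.mpr (fun x hxμ hxν =>
            hdisj x ⟨hxμ, Multiset.mem_toFinset.mp hxν⟩)
        have e2 : (nuL (sparts π)).filter (fun x => ¬ x ∈ (nuL (sparts π)).toFinset)
            = 0 :=
          Multiset.filter_eq_nil.mpr (fun x hx hxn => hxn (Multiset.mem_toFinset.mpr hx))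
        rw [e1, e2, add_zero]
      rw [hfilν, hfilμ, buildList_coe, ← sparts_coe π]
      have hpd := parts_decomp (sparts_sorted π)
      rw [hd] at hpd
      exact hpd.symm
    · -- right inverse
      intro S hS
      rw [Finset.mem_coe, Finset.mem_powerset] at hS
      beta_reduce
      rw [hjnu S]
      ext x
      rw [Multiset.mem_toFinset, Multiset.mem_filter]
      constructor
      · intro h
        exact h.2
      · intro hx
        exact ⟨Multiset.mem_toFinset.mp (hS hx), hx⟩
  rw [hcard, Finset.card_powerset, tRR_eq_card hRRπ' hk, hm']


end BasisPartitions
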